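/- Let p be an odd prime, H ≤ (Z/pZ)^× a subgroup of index ℓ with −1 ∈ H, and g a primitive root. For every i,j, the map φ(α) = 1 + (α − 1)^{−1} is a bijection from (1 + g^i H) ∩ g^j H onto (1 + g^{−i} H) ∩ g^{j−i} H. -/

import Mathlib

/-- The coset `g^i H` viewed as a subset of `ZMod p`. -/
def coset (p : ℕ) (g : (ZMod p)ˣ) (H : Subgroup (ZMod p)ˣ) (i : ℤ) : Set (ZMod p) :=
  (fun h : (ZMod p)ˣ => ((g ^ i * h : (ZMod p)ˣ) : ZMod p)) '' (H : Set (ZMod p)ˣ)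

/-- The cyclotomic number `A(i,j) = |(1 + g^i H) ∩ g^j H|`. -/
noncomputable def cyc (p : ℕ) (g : (ZMod p)ˣ) (H : Subgroup (ZMod p)ˣ) (i j : ℤ) : ℕ :=
  (((fun x => 1 + x) '' coset p g H i) ∩ coset p g H j).ncard

lemma aux_mapsTo (p : ℕ) [Fact p.Prime] (H : Subgroup (ZMod p)ˣ)
    (g : (ZMod p)ˣ) (i j : ℤ) :
    Set.MapsTo (fun α : ZMod p => 1 + (α - 1)⁻¹)
      (((fun x => 1 + x) '' coset p g H i) ∩ coset p g H j)
      (((fun x => 1 + x) '' coset p g H (-i)) ∩ coset p g H (j - i)) := by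
  rintro α ⟨⟨x, ⟨h, hH, rfl⟩, rfl⟩, h', hH', hα⟩
  have hsub : (1 : ZMod p) + ↑(g ^ i * h) - 1 = ↑(g ^ i * h) := by ring
  have hinv : ((1 : ZMod p) + ↑(g ^ i * h) - 1)⁻¹ = ((g ^ i * h)⁻¹ : (ZMod p)ˣ) := by
    rw [hsub]; exact (Units.val_inv_eq_inv_val _).symm
  constructor
  · exact ⟨((g ^ i * h)⁻¹ : (ZMod p)ˣ), ⟨h⁻¹, H.inv_mem hH,
      by rw [mul_inv, ← zpow_neg]⟩, by simp only [hinv]⟩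
  · refine ⟨h⁻¹ * h', H.mul_mem (H.inv_mem hH) hH', ?_⟩
    show ((g ^ (j - i) * (h⁻¹ * h') : (ZMod p)ˣ) : ZMod p) = 1 + _
    rw [hinv]
    have : (g ^ (j - i) * (h⁻¹ * h') : (ZMod p)ˣ)
        = (g ^ i * h)⁻¹ * (g ^ j * h') := by
      simp [mul_inv, ← zpow_neg, zpow_sub, mul_comm, mul_assoc, mul_left_comm]
    have hα' : ((g ^ j * h' : (ZMod p)ˣ) : ZMod p) = 1 + ((g ^ i * h : (ZMod p)ˣ) : ZMod p) := hα
    rw [this, Units.val_mul, hα']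
    have hu : ((g ^ i * h : (ZMod p)ˣ) : ZMod p) ≠ 0 := Units.ne_zero _
    have hg0 : ((g : ZMod p)) ^ i ≠ 0 := zpow_ne_zero _ (Units.ne_zero g)
    have hh0 : ((h : ZMod p)) ≠ 0 := Units.ne_zero h
    field_simp [Units.val_inv_eq_inv_val]
    ring_nf; rw [Units.inv_mul]; ring

theorem stmt_18 (p : ℕ) [Fact p.Prime] (hodd : Odd p)
    (H : Subgroup (ZMod p)ˣ) (ℓ : ℕ) (hℓ : H.index = ℓ) (hneg : (-1 : (ZMod p)ˣ) ∈ H)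
    (g : (ZMod p)ˣ) (hg : ∀ x : (ZMod p)ˣ, x ∈ Subgroup.zpowers g)
    (i j : ℤ) :
    Set.BijOn (fun α : ZMod p => 1 + (α - 1)⁻¹)
      (((fun x => 1 + x) '' coset p g H i) ∩ coset p g H j)
      (((fun x => 1 + x) '' coset p g H (-i)) ∩ coset p g H (j - i)) := by
  have key : ∀ α : ZMod p, (fun α : ZMod p => 1 + (α - 1)⁻¹)
      ((fun α : ZMod p => 1 + (α - 1)⁻¹) α) = α := by
    intro α
    show 1 + (1 + (α - 1)⁻¹ - 1)⁻¹ = α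
    rw [add_sub_cancel_left, inv_inv]; ring
  refine Set.InvOn.bijOn ⟨fun α _ => key α, fun α _ => key α⟩
    (aux_mapsTo p H g i j) ?_
  simpa using aux_mapsTo p H g (-i) (j - i)
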